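/- Let g : [0,∞) → ℝ be continuous and nonnegative, let ε > 0, and let k : (0,∞) → ℝ be a measurable nonnegative function for which there exist constants 0 < c₃ ≤ c₄ and 0 < c₅ ≤ c₆ with c₃ s^{−1/2} ≤ k(s) ≤ c₄ s^{−1/2} for all s ∈ (0,ε] and c₅ ≤ k(s) ≤ c₆ for all s ≥ ε. Then sup_{t ≥ 0} ∫₀^t k(t−τ) g(τ) dτ < ∞ if and only if both ∫₀^∞ g(t) dt < ∞ and there exist positive constants t₀, α, C with α > t₀ such that ∫_{t−t₀}^t g(τ)(t−τ)^{−1/2} dτ ≤ C for all t ≥ α. -/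

import Mathlib

open MeasureTheory Set Filter

private lemma aux_rpow_int (a b : ℝ) :
    IntegrableOn (fun s : ℝ => s ^ (-(1/2) : ℝ)) (Ioc a b) :=
  (intervalIntegral.intervalIntegrable_rpow' (by norm_num)).1

private lemma aux_sub_rpow_int (t a b : ℝ) :
    IntegrableOn (fun τ : ℝ => (t - τ) ^ (-(1/2) : ℝ)) (Ioc a b) := by
  have h := (intervalIntegral.intervalIntegrable_rpow' (r := -(1/2)) (by norm_num)
      (a := t - a) (b := t - b)).comp_sub_left t
  simpa using h.1

private lemma aux_ae_ne (S : Set ℝ) (t : ℝ) :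
    ∀ᵐ τ ∂(volume.restrict S), τ ≠ t :=
  ae_restrict_of_ae (by
    rw [ae_iff]
    simp)

/-- For a continuous nonnegative `g` on `[0,∞)` and a measurable
nonnegative kernel `k` on `(0,∞)` comparable to `s^{-1/2}` near `0` and to a
constant away from `0`, the convolutions `∫₀^t k(t−τ) g(τ) dτ` are uniformly
bounded in `t ≥ 0` iff `∫₀^∞ g < ∞` and the windowed integrals
`∫_{t−t₀}^t g(τ)(t−τ)^{−1/2} dτ` are uniformly bounded for large `t`. -/
theorem stmt_9 (g : ℝ → ℝ) (hg_cont : ContinuousOn g (Ici 0))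
    (hg_nonneg : ∀ t ≥ (0:ℝ), 0 ≤ g t)
    (ε : ℝ) (hε : 0 < ε) (k : ℝ → ℝ) (hk_meas : Measurable k)
    (hk_nonneg : ∀ s > (0:ℝ), 0 ≤ k s)
    (c₃ c₄ c₅ c₆ : ℝ) (hc₃ : 0 < c₃) (hc₃₄ : c₃ ≤ c₄) (hc₅ : 0 < c₅) (hc₅₆ : c₅ ≤ c₆)
    (hk_small : ∀ s ∈ Ioc (0:ℝ) ε,
      c₃ * s ^ (-(1/2) : ℝ) ≤ k s ∧ k s ≤ c₄ * s ^ (-(1/2) : ℝ))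
    (hk_large : ∀ s ≥ ε, c₅ ≤ k s ∧ k s ≤ c₆) :
    (∃ M : ℝ, ∀ t ≥ (0:ℝ), (∫ τ in (0:ℝ)..t, k (t - τ) * g τ) ≤ M) ↔
      (IntegrableOn g (Ioi 0) ∧
        ∃ t₀ α C : ℝ, 0 < t₀ ∧ t₀ < α ∧ 0 < C ∧
          ∀ t ≥ α, (∫ τ in (t - t₀)..t, g τ * (t - τ) ^ (-(1/2) : ℝ)) ≤ C) := by
  have hc₄ : 0 < c₄ := hc₃.trans_le hc₃₄
  have hc₆ : 0 < c₆ := hc₅.trans_le hc₅₆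
  -- g measurability on subintervals of [0,∞)
  have hgm : ∀ a b : ℝ, 0 ≤ a →
      AEMeasurable g (volume.restrict (Ioc a b)) := by
    intro a b ha
    exact (hg_cont.mono (fun x hx => ha.trans hx.1.le)).aemeasurable measurableSet_Ioc
  -- bound on g on compacts
  have hGbound : ∀ b : ℝ, 0 ≤ b → ∃ G : ℝ, 0 ≤ G ∧ ∀ τ ∈ Icc (0:ℝ) b, g τ ≤ G := by
    intro b hb
    obtain ⟨x, hx, hmax⟩ := isCompact_Icc.exists_isMaxOn (nonempty_Icc.2 hb)
      (hg_cont.mono (Icc_subset_Ici_self))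
    exact ⟨g x, hg_nonneg x hx.1, fun τ hτ => hmax hτ⟩
  -- global upper bound on k
  have hk_upper : ∀ s : ℝ, 0 < s → k s ≤ c₄ * s ^ (-(1/2):ℝ) + c₆ := by
    intro s hs
    rcases le_or_gt s ε with h | h
    · have h1 := (hk_small s ⟨hs, h⟩).2
      linarith
    · have h1 := (hk_large s h.le).2
      have h2 : 0 ≤ c₄ * s ^ (-(1/2):ℝ) := by positivity
      linarith
  have hεr : 0 < ε ^ (-(1/2):ℝ) := Real.rpow_pos_of_pos hε _
  -- global positive lower bound on k
  have hk_lower : ∀ s : ℝ, 0 < s → min c₅ (c₃ * ε ^ (-(1/2):ℝ)) ≤ k s := by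
    intro s hs
    rcases le_or_gt s ε with h | h
    · refine le_trans (min_le_right _ _) (le_trans ?_ (hk_small s ⟨hs, h⟩).1)
      have h2 : ε ^ (-(1/2):ℝ) ≤ s ^ (-(1/2):ℝ) :=
        Real.rpow_le_rpow_of_nonpos hs h (by norm_num)
      exact mul_le_mul_of_nonneg_left h2 hc₃.le
    · exact le_trans (min_le_left _ _) (hk_large s h.le).1
  -- integrability of the convolution integrand
  have hconv_int : ∀ t : ℝ, 0 ≤ t →
      IntegrableOn (fun τ => k (t - τ) * g τ) (Ioc 0 t) := by
    intro t ht
    obtain ⟨G, hG0, hG⟩ := hGbound t ht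
    have hmeas : AEStronglyMeasurable (fun τ => k (t - τ) * g τ)
        (volume.restrict (Ioc 0 t)) :=
      (((hk_meas.comp (measurable_const.sub measurable_id)).aemeasurable).mul
        (hgm 0 t le_rfl)).aestronglyMeasurable
    have hbound_int : Integrable (fun τ => (c₄ * (t - τ) ^ (-(1/2):ℝ) + c₆) * G)
        (volume.restrict (Ioc 0 t)) :=
      (((aux_sub_rpow_int t 0 t).const_mul c₄).add
        (integrableOn_const measure_Ioc_lt_top.ne)).mul_const G
    refine hbound_int.mono' hmeas ?_
    filter_upwards [ae_restrict_mem measurableSet_Ioc, aux_ae_ne (Ioc 0 t) t]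
      with τ hτ hne
    have hst : 0 < t - τ := sub_pos.2 (hτ.2.lt_of_ne hne)
    have h1 : 0 ≤ k (t - τ) := hk_nonneg _ hst
    have h2 : 0 ≤ g τ := hg_nonneg τ hτ.1.le
    rw [Real.norm_eq_abs, abs_of_nonneg (mul_nonneg h1 h2)]
    refine mul_le_mul (hk_upper _ hst) (hG τ ⟨hτ.1.le, hτ.2⟩) h2 (by positivity)
  -- a.e. nonnegativity of the convolution integrand
  have hconv_nonneg : ∀ t a : ℝ, 0 ≤ a →
      0 ≤ᵐ[volume.restrict (Ioc a t)] fun τ => k (t - τ) * g τ := by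
    intro t a ha
    filter_upwards [ae_restrict_mem measurableSet_Ioc, aux_ae_ne (Ioc a t) t]
      with τ hτ hne
    have hst : 0 < t - τ := sub_pos.2 (hτ.2.lt_of_ne hne)
    exact mul_nonneg (hk_nonneg _ hst) (hg_nonneg τ (ha.trans hτ.1.le))
  -- integrability of the windowed integrand
  have hwin_int : ∀ t a : ℝ, 0 ≤ a →
      IntegrableOn (fun τ => g τ * (t - τ) ^ (-(1/2):ℝ)) (Ioc a t) := by
    intro t a ha
    rcases le_or_gt t a with h | h
    · rw [Ioc_eq_empty (not_lt.2 h)]; exact integrableOn_empty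
    · obtain ⟨G, hG0, hG⟩ := hGbound t (ha.trans h.le)
      have hmeas : AEStronglyMeasurable (fun τ => g τ * (t - τ) ^ (-(1/2):ℝ))
          (volume.restrict (Ioc a t)) :=
        ((hgm a t ha).mul
          ((by fun_prop : Measurable fun τ : ℝ => (t - τ) ^ (-(1/2):ℝ))).aemeasurable).aestronglyMeasurable
      have hbound_int : Integrable (fun τ => G * (t - τ) ^ (-(1/2):ℝ))
          (volume.restrict (Ioc a t)) := (aux_sub_rpow_int t a t).const_mul G
      refine hbound_int.mono' hmeas ?_
      filter_upwards [ae_restrict_mem measurableSet_Ioc] with τ hτ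
      have h0 : 0 ≤ t - τ := sub_nonneg.2 hτ.2
      have h2 : 0 ≤ g τ := hg_nonneg τ (ha.trans hτ.1.le)
      have h3 : 0 ≤ (t - τ) ^ (-(1/2):ℝ) := Real.rpow_nonneg h0 _
      rw [Real.norm_eq_abs, abs_of_nonneg (mul_nonneg h2 h3)]
      exact mul_le_mul_of_nonneg_right (hG τ ⟨ha.trans hτ.1.le, hτ.2⟩) h3
  constructor
  · rintro ⟨M, hM⟩
    have hM0 : 0 ≤ M := by simpa using hM 0 le_rfl
    set c : ℝ := min c₅ (c₃ * ε ^ (-(1/2):ℝ)) with hcdef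
    have hc0 : 0 < c := lt_min hc₅ (mul_pos hc₃ hεr)
    -- bounded integrals of g
    have hgbdd : ∀ t : ℝ, 0 ≤ t → (∫ τ in Ioc (0:ℝ) t, g τ) ≤ M / c := by
      intro t ht
      have key : c * ∫ τ in Ioc (0:ℝ) t, g τ ≤ ∫ τ in Ioc (0:ℝ) t, k (t - τ) * g τ := by
        rw [← integral_const_mul]
        refine integral_mono_of_nonneg ?_ (hconv_int t ht) ?_
        · filter_upwards [ae_restrict_mem measurableSet_Ioc] with τ hτ
          exact mul_nonneg hc0.le (hg_nonneg τ hτ.1.le)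
        · filter_upwards [ae_restrict_mem measurableSet_Ioc, aux_ae_ne (Ioc 0 t) t]
            with τ hτ hne
          have hst : 0 < t - τ := sub_pos.2 (hτ.2.lt_of_ne hne)
          exact mul_le_mul_of_nonneg_right (hk_lower _ hst) (hg_nonneg τ hτ.1.le)
      have h2 := hM t ht
      rw [intervalIntegral.integral_of_le ht] at h2
      have h3 := key.trans h2
      rw [mul_comm] at h3
      exact (le_div_iff₀ hc0).2 h3
    have hint : IntegrableOn g (Ioi 0) := by
      refine integrableOn_Ioi_of_intervalIntegral_norm_bounded (M / c) 0
        (b := fun n : ℕ => (n : ℝ)) (l := atTop) (fun n => ?_) tendsto_natCast_atTop_atTop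
        (Eventually.of_forall fun n => ?_)
      · exact ((hg_cont.mono (fun x hx => hx.1 : Icc (0:ℝ) (n:ℝ) ⊆ Ici 0)).integrableOn_Icc).mono_set
          Ioc_subset_Icc_self
      · rw [intervalIntegral.integral_of_le (Nat.cast_nonneg n)]
        have : (∫ τ in Ioc (0:ℝ) (n:ℝ), ‖g τ‖) = ∫ τ in Ioc (0:ℝ) (n:ℝ), g τ := by
          refine integral_congr_ae ?_
          filter_upwards [ae_restrict_mem measurableSet_Ioc] with τ hτ
          exact Real.norm_of_nonneg (hg_nonneg τ hτ.1.le)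
        rw [this]
        exact hgbdd _ (Nat.cast_nonneg n)
    have hMc₃ : 0 ≤ M / c₃ := div_nonneg hM0 hc₃.le
    refine ⟨hint, ε, ε + 1, M / c₃ + 1, hε, by linarith, by linarith, ?_⟩
    intro t ht
    have ht0 : (0:ℝ) ≤ t - ε := by linarith
    have htt : t - ε ≤ t := by linarith
    rw [intervalIntegral.integral_of_le htt]
    have key : c₃ * ∫ τ in Ioc (t - ε) t, g τ * (t - τ) ^ (-(1/2):ℝ)
        ≤ ∫ τ in Ioc (t - ε) t, k (t - τ) * g τ := by
      rw [← integral_const_mul]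
      refine integral_mono_of_nonneg ?_
        ((hconv_int t (by linarith)).mono_set (Ioc_subset_Ioc_left ht0)) ?_
      · filter_upwards [ae_restrict_mem measurableSet_Ioc] with τ hτ
        have h2 : 0 ≤ g τ := hg_nonneg τ (ht0.trans hτ.1.le)
        have h3 : 0 ≤ (t - τ) ^ (-(1/2):ℝ) := Real.rpow_nonneg (by linarith [hτ.2]) _
        positivity
      · filter_upwards [ae_restrict_mem measurableSet_Ioc, aux_ae_ne (Ioc (t - ε) t) t]
          with τ hτ hne
        have hst : 0 < t - τ := sub_pos.2 (hτ.2.lt_of_ne hne)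
        have hsε : t - τ ≤ ε := by linarith [hτ.1]
        have h2 : 0 ≤ g τ := hg_nonneg τ (ht0.trans hτ.1.le)
        have h4 := (hk_small (t - τ) ⟨hst, hsε⟩).1
        calc c₃ * (g τ * (t - τ) ^ (-(1/2):ℝ)) = (c₃ * (t - τ) ^ (-(1/2):ℝ)) * g τ := by ring
          _ ≤ k (t - τ) * g τ := mul_le_mul_of_nonneg_right h4 h2
    have hchain : (∫ τ in Ioc (t - ε) t, k (t - τ) * g τ)
        ≤ ∫ τ in Ioc (0:ℝ) t, k (t - τ) * g τ :=
      setIntegral_mono_set (hconv_int t (by linarith)) (hconv_nonneg t 0 le_rfl)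
        ((Ioc_subset_Ioc_left ht0).eventuallyLE)
    have h2 := hM t (by linarith)
    rw [intervalIntegral.integral_of_le (by linarith : (0:ℝ) ≤ t)] at h2
    have h3 : c₃ * ∫ τ in Ioc (t - ε) t, g τ * (t - τ) ^ (-(1/2):ℝ) ≤ M :=
      key.trans (hchain.trans h2)
    have h4 : (∫ τ in Ioc (t - ε) t, g τ * (t - τ) ^ (-(1/2):ℝ)) ≤ M / c₃ :=
      (le_div_iff₀' hc₃).2 h3
    linarith
  · rintro ⟨hint, t₀, α, C, ht₀, htα, hC, hwin⟩
    set t₀' : ℝ := min t₀ ε with ht₀'def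
    have ht₀'pos : 0 < t₀' := lt_min ht₀ hε
    have hα0 : 0 < α := ht₀.trans htα
    set K₁ : ℝ := c₄ * t₀' ^ (-(1/2):ℝ) + c₆ with hK₁def
    have hK₁0 : 0 ≤ K₁ := by positivity
    have hk_mid : ∀ s : ℝ, t₀' ≤ s → k s ≤ K₁ := by
      intro s hs
      have hs0 : 0 < s := ht₀'pos.trans_le hs
      rcases le_or_gt s ε with h | h
      · have h1 := (hk_small s ⟨hs0, h⟩).2
        have h2 : s ^ (-(1/2):ℝ) ≤ t₀' ^ (-(1/2):ℝ) :=
          Real.rpow_le_rpow_of_nonpos ht₀'pos hs (by norm_num)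
        have h3 : c₄ * s ^ (-(1/2):ℝ) ≤ c₄ * t₀' ^ (-(1/2):ℝ) :=
          mul_le_mul_of_nonneg_left h2 hc₄.le
        simp only [hK₁def]
        linarith
      · have h1 := (hk_large s h.le).2
        have h2 : 0 ≤ c₄ * t₀' ^ (-(1/2):ℝ) := by positivity
        simp only [hK₁def]
        linarith
    set I : ℝ := ∫ τ in Ioi (0:ℝ), g τ with hIdef
    have hI0 : 0 ≤ I := by
      refine setIntegral_nonneg measurableSet_Ioi fun τ hτ => hg_nonneg τ (le_of_lt hτ)
    have hg_ae_nonneg : 0 ≤ᵐ[volume.restrict (Ioi (0:ℝ))] g := by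
      filter_upwards [ae_restrict_mem measurableSet_Ioi] with τ hτ
      exact hg_nonneg τ hτ.le
    obtain ⟨G, hG0, hG⟩ := hGbound α hα0.le
    set D : ℝ := ∫ s in Ioc (0:ℝ) α, G * (c₄ * s ^ (-(1/2):ℝ) + c₆) with hDdef
    have hDint : IntegrableOn (fun s : ℝ => G * (c₄ * s ^ (-(1/2):ℝ) + c₆)) (Ioc 0 α) :=
      (((aux_rpow_int 0 α).const_mul c₄).add
        (integrableOn_const measure_Ioc_lt_top.ne)).const_mul G
    refine ⟨max (K₁ * I + c₄ * C) D, ?_⟩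
    intro t ht
    rw [intervalIntegral.integral_of_le ht]
    rcases le_or_gt t α with hta | hta
    · -- small t : compare with the fixed integral D
      have step1 : (∫ τ in Ioc (0:ℝ) t, k (t - τ) * g τ)
          ≤ ∫ τ in Ioc (0:ℝ) t, G * (c₄ * (t - τ) ^ (-(1/2):ℝ) + c₆) := by
        refine integral_mono_of_nonneg (hconv_nonneg t 0 le_rfl)
          ((((aux_sub_rpow_int t 0 t).const_mul c₄).add
            (integrableOn_const measure_Ioc_lt_top.ne)).const_mul G) ?_
        filter_upwards [ae_restrict_mem measurableSet_Ioc, aux_ae_ne (Ioc 0 t) t]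
          with τ hτ hne
        have hst : 0 < t - τ := sub_pos.2 (hτ.2.lt_of_ne hne)
        have h2 : 0 ≤ g τ := hg_nonneg τ hτ.1.le
        calc k (t - τ) * g τ ≤ (c₄ * (t - τ) ^ (-(1/2):ℝ) + c₆) * G :=
              mul_le_mul (hk_upper _ hst) (hG τ ⟨hτ.1.le, hτ.2.trans hta⟩) h2 (by positivity)
          _ = G * (c₄ * (t - τ) ^ (-(1/2):ℝ) + c₆) := by ring
      have step2 : (∫ τ in Ioc (0:ℝ) t, G * (c₄ * (t - τ) ^ (-(1/2):ℝ) + c₆))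
          = ∫ s in Ioc (0:ℝ) t, G * (c₄ * s ^ (-(1/2):ℝ) + c₆) := by
        have h := intervalIntegral.integral_comp_sub_left (a := 0) (b := t)
          (fun s => G * (c₄ * s ^ (-(1/2):ℝ) + c₆)) t
        simp only [sub_self, sub_zero] at h
        rw [intervalIntegral.integral_of_le ht, intervalIntegral.integral_of_le ht] at h
        exact h
      have step3 : (∫ s in Ioc (0:ℝ) t, G * (c₄ * s ^ (-(1/2):ℝ) + c₆)) ≤ D := by
        refine setIntegral_mono_set hDint ?_ ((Ioc_subset_Ioc_right hta).eventuallyLE)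
        filter_upwards [ae_restrict_mem measurableSet_Ioc] with s hs
        have : 0 ≤ s ^ (-(1/2):ℝ) := Real.rpow_nonneg hs.1.le _
        positivity
      exact le_trans (step1.trans (step2.le.trans step3)) (le_max_right _ _)
    · -- large t : split at t - t₀'
      have ht₀t : t₀' ≤ t₀ := min_le_left _ _
      have hmt : 0 ≤ t - t₀' := by linarith
      have hmt' : t - t₀' ≤ t := by linarith
      have hii : IntervalIntegrable (fun τ => k (t - τ) * g τ) volume 0 (t - t₀') :=
        (intervalIntegrable_iff_integrableOn_Ioc_of_le hmt).2
          ((hconv_int t ht).mono_set (Ioc_subset_Ioc_right hmt'))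
      have hii2 : IntervalIntegrable (fun τ => k (t - τ) * g τ) volume (t - t₀') t :=
        (intervalIntegrable_iff_integrableOn_Ioc_of_le hmt').2
          ((hconv_int t ht).mono_set (Ioc_subset_Ioc_left hmt))
      have hsplit : (∫ τ in Ioc (0:ℝ) t, k (t - τ) * g τ)
          = (∫ τ in Ioc (0:ℝ) (t - t₀'), k (t - τ) * g τ)
            + ∫ τ in Ioc (t - t₀') t, k (t - τ) * g τ := by
        have h := intervalIntegral.integral_add_adjacent_intervals hii hii2
        rw [intervalIntegral.integral_of_le hmt, intervalIntegral.integral_of_le hmt',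
          intervalIntegral.integral_of_le ht] at h
        exact h.symm
      -- tail piece
      have htail : (∫ τ in Ioc (0:ℝ) (t - t₀'), k (t - τ) * g τ) ≤ K₁ * I := by
        have h1 : (∫ τ in Ioc (0:ℝ) (t - t₀'), k (t - τ) * g τ)
            ≤ ∫ τ in Ioc (0:ℝ) (t - t₀'), K₁ * g τ := by
          refine integral_mono_of_nonneg ?_
            ((hint.mono_set Ioc_subset_Ioi_self).const_mul K₁) ?_
          · filter_upwards [ae_restrict_mem measurableSet_Ioc] with τ hτ
            have hst : 0 < t - τ := by
              have := hτ.2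
              linarith [ht₀'pos]
            exact mul_nonneg (hk_nonneg _ hst) (hg_nonneg τ hτ.1.le)
          · filter_upwards [ae_restrict_mem measurableSet_Ioc] with τ hτ
            have hst : t₀' ≤ t - τ := by linarith [hτ.2]
            exact mul_le_mul_of_nonneg_right (hk_mid _ hst) (hg_nonneg τ hτ.1.le)
        have h2 : (∫ τ in Ioc (0:ℝ) (t - t₀'), K₁ * g τ) = K₁ * ∫ τ in Ioc (0:ℝ) (t - t₀'), g τ :=
          integral_const_mul _ _
        have h3 : (∫ τ in Ioc (0:ℝ) (t - t₀'), g τ) ≤ I :=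
          setIntegral_mono_set hint hg_ae_nonneg
            ((Ioc_subset_Ioi_self (b := (0:ℝ)) (a := t - t₀')).eventuallyLE)
        calc (∫ τ in Ioc (0:ℝ) (t - t₀'), k (t - τ) * g τ)
            ≤ K₁ * ∫ τ in Ioc (0:ℝ) (t - t₀'), g τ := by rw [← h2]; exact h1
          _ ≤ K₁ * I := mul_le_mul_of_nonneg_left h3 hK₁0
      -- near piece
      have ht₀pos' : 0 ≤ t - t₀ := by linarith
      have hnear : (∫ τ in Ioc (t - t₀') t, k (t - τ) * g τ) ≤ c₄ * C := by
        have h1 : (∫ τ in Ioc (t - t₀') t, k (t - τ) * g τ)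
            ≤ ∫ τ in Ioc (t - t₀') t, c₄ * (g τ * (t - τ) ^ (-(1/2):ℝ)) := by
          refine integral_mono_of_nonneg (hconv_nonneg t (t - t₀') hmt)
            ((hwin_int t (t - t₀') hmt).const_mul c₄) ?_
          filter_upwards [ae_restrict_mem measurableSet_Ioc, aux_ae_ne (Ioc (t - t₀') t) t]
            with τ hτ hne
          have hst : 0 < t - τ := sub_pos.2 (hτ.2.lt_of_ne hne)
          have hsε : t - τ ≤ ε := by
            have := hτ.1
            have h5 : t₀' ≤ ε := min_le_right _ _
            linarith
          have h2 : 0 ≤ g τ := hg_nonneg τ (hmt.trans hτ.1.le)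
          calc k (t - τ) * g τ ≤ (c₄ * (t - τ) ^ (-(1/2):ℝ)) * g τ :=
                mul_le_mul_of_nonneg_right (hk_small (t - τ) ⟨hst, hsε⟩).2 h2
            _ = c₄ * (g τ * (t - τ) ^ (-(1/2):ℝ)) := by ring
        have h2 : (∫ τ in Ioc (t - t₀') t, c₄ * (g τ * (t - τ) ^ (-(1/2):ℝ)))
            = c₄ * ∫ τ in Ioc (t - t₀') t, g τ * (t - τ) ^ (-(1/2):ℝ) :=
          integral_const_mul _ _
        have h3 : (∫ τ in Ioc (t - t₀') t, g τ * (t - τ) ^ (-(1/2):ℝ))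
            ≤ ∫ τ in Ioc (t - t₀) t, g τ * (t - τ) ^ (-(1/2):ℝ) := by
          refine setIntegral_mono_set (hwin_int t (t - t₀) ht₀pos') ?_
            ((Ioc_subset_Ioc_left (by linarith)).eventuallyLE)
          filter_upwards [ae_restrict_mem measurableSet_Ioc] with τ hτ
          exact mul_nonneg (hg_nonneg τ (ht₀pos'.trans hτ.1.le))
            (Real.rpow_nonneg (by linarith [hτ.2]) _)
        have h4 := hwin t hta.le
        rw [intervalIntegral.integral_of_le (by linarith : t - t₀ ≤ t)] at h4
        calc (∫ τ in Ioc (t - t₀') t, k (t - τ) * g τ)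
            ≤ c₄ * ∫ τ in Ioc (t - t₀') t, g τ * (t - τ) ^ (-(1/2):ℝ) := by rw [← h2]; exact h1
          _ ≤ c₄ * C := mul_le_mul_of_nonneg_left (h3.trans h4) hc₄.le
      calc (∫ τ in Ioc (0:ℝ) t, k (t - τ) * g τ)
          = _ + _ := hsplit
        _ ≤ K₁ * I + c₄ * C := add_le_add htail hnear
        _ ≤ max (K₁ * I + c₄ * C) D := le_max_left _ _
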